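/- If L ∈ ℝ^{s×s} satisfies ‖L‖_p < 1 in some vector-induced p-norm, then the map G(z) = z - L|z| is a bijection on ℝ^s and its inverse is Lipschitz continuous with Lipschitz constant 1/(1 - ‖L‖_p). -/
import Mathlib


/-- An operator norm family induced by an absolute (monotone) vector norm,
abstracting the induced matrix p-norms. -/
structure PNormFamily where
  /-- the vector norm -/
  vnorm : ∀ {k : ℕ}, (Fin k → ℝ) → ℝ
  /-- the induced matrix norm -/
  mnorm : ∀ {m k : ℕ}, Matrix (Fin m) (Fin k) ℝ → ℝ
  vnorm_nonneg : ∀ {k : ℕ} (x : Fin k → ℝ), 0 ≤ vnorm x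
  vnorm_eq_zero_iff : ∀ {k : ℕ} (x : Fin k → ℝ), vnorm x = 0 ↔ x = 0
  vnorm_add_le : ∀ {k : ℕ} (x y : Fin k → ℝ), vnorm (x + y) ≤ vnorm x + vnorm y
  vnorm_smul : ∀ {k : ℕ} (c : ℝ) (x : Fin k → ℝ), vnorm (c • x) = |c| * vnorm x
  vnorm_mono : ∀ {k : ℕ} (x y : Fin k → ℝ), (∀ i, |x i| ≤ |y i|) → vnorm x ≤ vnorm y
  mnorm_spec : ∀ {m k : ℕ} (A : Matrix (Fin m) (Fin k) ℝ) (x : Fin k → ℝ),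
    vnorm (A.mulVec x) ≤ mnorm A * vnorm x
  mnorm_le : ∀ {m k : ℕ} (A : Matrix (Fin m) (Fin k) ℝ) (c : ℝ), 0 ≤ c →
    (∀ x : Fin k → ℝ, vnorm (A.mulVec x) ≤ c * vnorm x) → mnorm A ≤ c

/-- If `‖L‖_p < 1` then `G(z) = z - L|z|` is a bijection of `ℝ^s` whose inverse
is Lipschitz with constant `1/(1-‖L‖_p)`. -/
theorem bijective_sub_abs_of_norm_lt_one
    (s : ℕ) (P : PNormFamily) (L : Matrix (Fin s) (Fin s) ℝ)
    (hL : P.mnorm L < 1) :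
    Function.Bijective (fun z : Fin s → ℝ => z - L.mulVec fun i => |z i|) ∧
      ∀ y y' : Fin s → ℝ,
        P.vnorm (Function.invFun (fun z : Fin s → ℝ => z - L.mulVec fun i => |z i|) y -
            Function.invFun (fun z : Fin s → ℝ => z - L.mulVec fun i => |z i|) y')
          ≤ (1 / (1 - P.mnorm L)) * P.vnorm (y - y') := by
  set G : (Fin s → ℝ) → (Fin s → ℝ) := fun z => z - L.mulVec fun i => |z i| with hGdef
  set m : ℝ := P.mnorm L with hmdef
  rcases Nat.eq_zero_or_pos s with hs | hs
  · -- trivial case s = 0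
    subst hs
    have hsub : ∀ x : Fin 0 → ℝ, x = 0 := fun x => funext fun i => i.elim0
    refine ⟨⟨fun a b _ => (hsub a).trans (hsub b).symm,
        fun y => ⟨y, (hsub _).trans (hsub y).symm⟩⟩, fun y y' => ?_⟩
    have h0 : P.vnorm (Function.invFun G y - Function.invFun G y') = 0 :=
      (P.vnorm_eq_zero_iff _).mpr (hsub _)
    rw [h0]
    have : (0:ℝ) < 1 - m := by linarith
    exact mul_nonneg (by positivity) (P.vnorm_nonneg _)
  · -- main case s > 0
    have i0 : Fin s := ⟨0, hs⟩
    -- mnorm is nonnegative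
    have hm0 : 0 ≤ m := by
      have hx : (Pi.single i0 (1:ℝ) : Fin s → ℝ) ≠ 0 := by
        intro h
        have := congrFun h i0
        simp at this
      have hvx : 0 < P.vnorm (Pi.single i0 (1:ℝ) : Fin s → ℝ) :=
        lt_of_le_of_ne (P.vnorm_nonneg _) (fun h => hx ((P.vnorm_eq_zero_iff _).mp h.symm))
      have h1 : 0 ≤ P.vnorm (L.mulVec (Pi.single i0 (1:ℝ))) := P.vnorm_nonneg _
      have h2 := P.mnorm_spec L (Pi.single i0 (1:ℝ))
      nlinarith
    have h1m : (0:ℝ) < 1 - m := by linarith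
    -- componentwise |x|-difference bound
    have habsd : ∀ a b : Fin s → ℝ,
        P.vnorm ((fun i => |a i|) - fun i => |b i|) ≤ P.vnorm (a - b) := by
      intro a b
      refine P.vnorm_mono _ _ fun i => ?_
      simpa using abs_abs_sub_abs_le_abs_sub (a i) (b i)
    -- contraction bound for L applied to |a|-|b|
    have hLd : ∀ a b : Fin s → ℝ,
        P.vnorm (L.mulVec ((fun i => |a i|) - fun i => |b i|)) ≤ m * P.vnorm (a - b) := by
      intro a b
      calc P.vnorm (L.mulVec ((fun i => |a i|) - fun i => |b i|))
          ≤ m * P.vnorm ((fun i => |a i|) - fun i => |b i|) := P.mnorm_spec L _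
        _ ≤ m * P.vnorm (a - b) := mul_le_mul_of_nonneg_left (habsd a b) hm0
    -- G a - G b decomposition
    have hGab : ∀ a b : Fin s → ℝ,
        G a - G b = (a - b) - L.mulVec ((fun i => |a i|) - fun i => |b i|) := by
      intro a b
      simp only [hGdef, Matrix.mulVec_sub]
      abel
    -- inverse triangle inequality
    have hKey : ∀ a b : Fin s → ℝ, (1 - m) * P.vnorm (a - b) ≤ P.vnorm (G a - G b) := by
      intro a b
      have hdec : a - b = (G a - G b) + L.mulVec ((fun i => |a i|) - fun i => |b i|) := by
        rw [hGab]; abel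
      have h1 : P.vnorm (a - b) ≤ P.vnorm (G a - G b) +
          P.vnorm (L.mulVec ((fun i => |a i|) - fun i => |b i|)) := by
        rw [hdec]; exact P.vnorm_add_le _ _
      have h2 := hLd a b
      linarith
    -- injectivity
    have hinj : Function.Injective G := by
      intro a b hab
      have := hKey a b
      rw [hab, sub_self, (P.vnorm_eq_zero_iff (0:Fin s → ℝ)).mpr rfl] at this
      have hab0 : P.vnorm (a - b) = 0 :=
        le_antisymm (by nlinarith [P.vnorm_nonneg (a - b)]) (P.vnorm_nonneg _)
      have := (P.vnorm_eq_zero_iff _).mp hab0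
      exact sub_eq_zero.mp this
    -- norm equivalence: lower bound for vnorm via sup norm
    have hlow : ∀ (x : Fin s → ℝ) (i : Fin s),
        |x i| * P.vnorm (Pi.single i (1:ℝ) : Fin s → ℝ) ≤ P.vnorm x := by
      intro x i
      have h1 : P.vnorm (x i • (Pi.single i (1:ℝ) : Fin s → ℝ)) ≤ P.vnorm x := by
        refine P.vnorm_mono _ _ fun j => ?_
        by_cases hji : j = i
        · subst hji; simp
        · simp [Pi.single_apply, hji, abs_nonneg]
      rwa [P.vnorm_smul] at h1
    haveI : Nonempty (Fin s) := ⟨i0⟩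
    set ε : ℝ := Finset.univ.inf' (Finset.univ_nonempty) (fun i => P.vnorm (Pi.single i (1:ℝ) : Fin s → ℝ))
      with hεdef
    have hε : 0 < ε := by
      rw [hεdef, Finset.lt_inf'_iff]
      intro i _
      have hx : (Pi.single i (1:ℝ) : Fin s → ℝ) ≠ 0 := by
        intro h; have := congrFun h i; simp at this
      exact lt_of_le_of_ne (P.vnorm_nonneg _)
        (fun h => hx ((P.vnorm_eq_zero_iff _).mp h.symm))
    have hsup : ∀ x : Fin s → ℝ, ‖x‖ ≤ P.vnorm x / ε := by
      intro x
      rw [pi_norm_le_iff_of_nonneg (div_nonneg (P.vnorm_nonneg x) hε.le)]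
      intro i
      have h1 := hlow x i
      have h2 : ε ≤ P.vnorm (Pi.single i (1:ℝ) : Fin s → ℝ) := by
        rw [hεdef]; exact Finset.inf'_le _ (Finset.mem_univ i)
      rw [Real.norm_eq_abs, le_div_iff₀ hε]
      nlinarith [abs_nonneg (x i)]
    -- surjectivity via contraction iteration
    have hsurj : Function.Surjective G := by
      intro y
      set T : (Fin s → ℝ) → (Fin s → ℝ) := fun w => y + L.mulVec fun i => |w i| with hTdef
      have hTcon : ∀ a b : Fin s → ℝ, P.vnorm (T a - T b) ≤ m * P.vnorm (a - b) := by
        intro a b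
        have : T a - T b = L.mulVec ((fun i => |a i|) - fun i => |b i|) := by
          simp only [hTdef, Matrix.mulVec_sub]; abel
        rw [this]; exact hLd a b
      set z : ℕ → (Fin s → ℝ) := fun n => T^[n] y with hzdef
      have hzsucc : ∀ n, z (n + 1) = T (z n) := by
        intro n; simp only [hzdef, Function.iterate_succ_apply']
      set D : ℝ := P.vnorm (z 1 - z 0) with hDdef
      have hD0 : 0 ≤ D := P.vnorm_nonneg _
      have hgeo : ∀ n, P.vnorm (z (n + 1) - z n) ≤ m ^ n * D := by
        intro n
        induction n with
        | zero => simp [hDdef]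
        | succ k ih =>
          have h1 : P.vnorm (z (k + 2) - z (k + 1)) ≤ m * P.vnorm (z (k + 1) - z k) := by
            rw [hzsucc (k + 1), hzsucc k]; exact hTcon _ _
          calc P.vnorm (z (k + 2) - z (k + 1)) ≤ m * P.vnorm (z (k + 1) - z k) := h1
            _ ≤ m * (m ^ k * D) := mul_le_mul_of_nonneg_left ih hm0
            _ = m ^ (k + 1) * D := by ring
      have hcauchy : CauchySeq z := by
        refine cauchySeq_of_le_geometric m (D / ε) hL fun n => ?_
        rw [dist_eq_norm, norm_sub_rev]
        calc ‖z (n + 1) - z n‖ ≤ P.vnorm (z (n + 1) - z n) / ε := hsup _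
          _ ≤ m ^ n * D / ε := by
              exact div_le_div_of_nonneg_right (hgeo n) hε.le
          _ = D / ε * m ^ n := by ring
      obtain ⟨w, hw⟩ := cauchySeq_tendsto_of_complete hcauchy
      have hTcont : Continuous T := by
        refine continuous_const.add (Continuous.matrix_mulVec continuous_const ?_)
        exact continuous_pi fun i => (continuous_apply i).abs
      have hlim1 : Filter.Tendsto (fun n => z (n + 1)) Filter.atTop (nhds w) :=
        hw.comp (Filter.tendsto_add_atTop_nat 1)
      have hlim2 : Filter.Tendsto (fun n => T (z n)) Filter.atTop (nhds (T w)) :=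
        (hTcont.tendsto w).comp hw
      have hfix : T w = w := by
        refine tendsto_nhds_unique ?_ hlim1
        simpa only [hzsucc] using hlim2
      refine ⟨w, ?_⟩
      have : w - L.mulVec (fun i => |w i|) = y := by
        have h := hfix
        simp only [hTdef] at h
        exact sub_eq_iff_eq_add.mpr h.symm
      simpa [hGdef] using this
    refine ⟨⟨hinj, hsurj⟩, fun y y' => ?_⟩
    have hzy : G (Function.invFun G y) = y := Function.rightInverse_invFun hsurj y
    have hzy' : G (Function.invFun G y') = y' := Function.rightInverse_invFun hsurj y'
    have hk := hKey (Function.invFun G y) (Function.invFun G y')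
    rw [hzy, hzy'] at hk
    rw [one_div, ← div_eq_inv_mul, le_div_iff₀ h1m]
    linarith
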